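/- Let M₁ and M₂ be finite automata over Σ recognizing languages Init and Bad, τ a finite length-preserving transducer over Σ, and Φ their first-order encoding. If r_τ*(Init) ∩ Bad ≠ ∅, then the sentence ∃x (R(x) ∧ Bad(x)) is a semantic consequence of Φ. Consequently, if some first-order structure satisfies Φ and ¬∃x (R(x) ∧ Bad(x)), then r_τ*(Init) ∩ Bad = ∅. -/

import Mathlib

/-- A finite automaton over the alphabet `A`: a finite state set, a set of
transitions, an initial state and a set of final states. -/
structure FA (A : Type) : Type 1 where
  State : Type
  fin : Finite State
  delta : Set (State × A × State)
  start : State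
  final : Set State

/-- The extended transition relation `q →^w q'` of a finite automaton: the
least relation containing `q →^ε q`, the one-letter transitions, and closed
under appending a letter. -/
inductive FA.Ext {A : Type} (M : FA A) : M.State → List A → M.State → Prop
  | refl (q : M.State) : FA.Ext M q [] q
  | step {q : M.State} {w : List A} {q' : M.State} {a : A} {q'' : M.State} :
      FA.Ext M q w q' → (q', a, q'') ∈ M.delta → FA.Ext M q (w ++ [a]) q''

/-- The language recognized by a finite automaton:
`L(M) = {w | ∃ q' ∈ F, q₀ →^w q'}`. -/
def FA.lang {A : Type} (M : FA A) : Set (List A) :=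
  {w | ∃ q ∈ M.final, M.Ext M.start w q}

/-- A finite length-preserving transducer over the alphabet `A`. -/
structure FT (A : Type) : Type 1 where
  State : Type
  fin : Finite State
  delta : Set (State × A × A × State)
  start : State
  final : Set State

/-- The extended transition relation `q →^{w,u} q'` of a transducer: the least
relation containing `q →^{ε,ε} q`, the one-letter transitions, and closed under
appending a pair of letters. -/
inductive FT.Ext {A : Type} (t : FT A) :
    t.State → List A → List A → t.State → Prop
  | refl (q : t.State) : FT.Ext t q [] [] q
  | step {q : t.State} {w u : List A} {q' : t.State} {a b : A} {q'' : t.State} :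
      FT.Ext t q w u q' → (q', a, b, q'') ∈ t.delta →
      FT.Ext t q (w ++ [a]) (u ++ [b]) q''

/-- The relation `r_τ = {⟨w,u⟩ | ∃ q' ∈ F, q₀ →^{w,u} q'}` induced by a
transducer. -/
def FT.rel {A : Type} (t : FT A) (w u : List A) : Prop :=
  ∃ q ∈ t.final, t.Ext t.start w u q

/-- Interpretation `[t_w]` of the closed term `t_w = s₁ * ⋯ * sₙ` (with
`t_ε = e`) in a structure with domain `D`. -/
def wordVal {A D : Type} (mul : D → D → D) (e : D) (ca : A → D) : List A → D
  | [] => e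
  | [a] => ca a
  | a :: b :: rest => mul (ca a) (wordVal mul e ca (b :: rest))

/-- A first-order structure (domain `D`, binary operation `mul`, constants `e`,
`ca a` for letters, `c1 q`, `c2 q`, `ct q` for automata/transducer states, and
predicates `RR`, `InitP`, `BadP`, `TransP`, `T3`, `T4`) satisfies all formulas
of the encoding `Φ` of the automata `M1`, `M2` and the transducer `t`. -/
def SatRMC {A : Type} (M1 M2 : FA A) (t : FT A) {D : Type}
    (mul : D → D → D) (e : D) (ca : A → D)
    (c1 : M1.State → D) (c2 : M2.State → D) (ct : t.State → D)
    (RR InitP BadP : D → Prop) (TransP : D → D → Prop)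
    (T3 : D → D → D → Prop) (T4 : D → D → D → D → Prop) : Prop :=
  -- (1) associativity
  (∀ x y z : D, mul (mul x y) z = mul x (mul y z)) ∧
  -- (2) T³(q, e, q) for all q ∈ Q₁ ∪ Q₂
  (∀ q : M1.State, T3 (c1 q) e (c1 q)) ∧
  (∀ q : M2.State, T3 (c2 q) e (c2 q)) ∧
  -- (3) T³(q, a, q') for all (q, a, q') ∈ δ₁ ∪ δ₂
  (∀ q a q', (q, a, q') ∈ M1.delta → T3 (c1 q) (ca a) (c1 q')) ∧
  (∀ q a q', (q, a, q') ∈ M2.delta → T3 (c2 q) (ca a) (c2 q')) ∧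
  -- (4)
  (∀ x y z v w : D, T3 x y z → T3 z v w → T3 x (mul y v) w) ∧
  -- (5)
  (∀ x : D, (∃ q ∈ M1.final, T3 (c1 M1.start) x (c1 q)) → InitP x) ∧
  -- (6)
  (∀ x : D, (∃ q ∈ M2.final, T3 (c2 M2.start) x (c2 q)) → BadP x) ∧
  -- (7)
  (∀ x : D, T4 x e e x) ∧
  -- (8)
  (∀ q a b q', (q, a, b, q') ∈ t.delta → T4 (ct q) (ca a) (ca b) (ct q')) ∧
  -- (9)
  (∀ x y z v y' z' w : D,
      T4 x y z v → T4 v y' z' w → T4 x (mul y y') (mul z z') w) ∧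
  -- (10)
  (∀ x y : D, TransP x y ↔ ∃ q ∈ t.final, T4 (ct t.start) x y (ct q)) ∧
  -- (11)
  (∀ x : D, InitP x → RR x) ∧
  -- (12)
  (∀ x y : D, RR x → TransP x y → RR y)

lemma wordVal_append {A D : Type} (mul : D → D → D) (e : D) (ca : A → D)
    (assoc : ∀ x y z : D, mul (mul x y) z = mul x (mul y z)) :
    ∀ (w : List A) (a : A), w ≠ [] →
      wordVal mul e ca (w ++ [a]) = mul (wordVal mul e ca w) (ca a)
  | [], _, h => absurd rfl h
  | [b], a, _ => rfl
  | b :: c :: rest, a, _ => by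
    have ih := wordVal_append mul e ca assoc (c :: rest) a (by simp)
    simp only [List.cons_append] at ih ⊢
    rw [show wordVal mul e ca (b :: c :: (rest ++ [a]))
        = mul (ca b) (wordVal mul e ca (c :: (rest ++ [a]))) from rfl,
      ih,
      show wordVal mul e ca (b :: c :: rest)
        = mul (ca b) (wordVal mul e ca (c :: rest)) from rfl,
      ← assoc]

lemma FA.Ext_nil {A : Type} {M : FA A} {q q' : M.State}
    (h : M.Ext q [] q') : q = q' := by
  have key : ∀ w, M.Ext q w q' → w = [] → q = q' := by
    intro w hw hnil
    cases hw with
    | refl => rfl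
    | step h hd => simp at hnil
  exact key [] h rfl

lemma ext_T3 {A : Type} {M : FA A} {D : Type} {St : Type}
    (mul : D → D → D) (e : D) (ca : A → D) (c : St → D)
    (T3 : D → D → D → Prop)
    (assoc : ∀ x y z : D, mul (mul x y) z = mul x (mul y z))
    (cast : M.State → St)
    (T3e : ∀ q : M.State, T3 (c (cast q)) e (c (cast q)))
    (T3a : ∀ q a q', (q, a, q') ∈ M.delta → T3 (c (cast q)) (ca a) (c (cast q')))
    (T3m : ∀ x y z v w : D, T3 x y z → T3 z v w → T3 x (mul y v) w) :
    ∀ {q w q'}, M.Ext q w q' → T3 (c (cast q)) (wordVal mul e ca w) (c (cast q')) := by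
  intro q w q' h
  induction h with
  | refl => exact T3e _
  | @step w q' a q'' h hd ih =>
    rcases eq_or_ne w [] with rfl | hw
    · obtain rfl := FA.Ext_nil h
      exact T3a _ _ _ hd
    · rw [wordVal_append mul e ca assoc w a hw]
      exact T3m _ _ _ _ _ ih (T3a _ _ _ hd)

lemma FT.Ext_len {A : Type} {t : FT A} {q : t.State} {w u : List A} {q' : t.State}
    (h : t.Ext q w u q') : w.length = u.length := by
  induction h with
  | refl => rfl
  | step h hd ih => simp [ih]

lemma FT.Ext_nil {A : Type} {t : FT A} {q q' : t.State} {u : List A}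
    (h : t.Ext q [] u q') : q = q' ∧ u = [] := by
  have key : ∀ w, t.Ext q w u q' → w = [] → q = q' ∧ u = [] := by
    intro w hw hnil
    cases hw with
    | refl => exact ⟨rfl, rfl⟩
    | step h hd => simp at hnil
  exact key [] h rfl

lemma ext_T4 {A : Type} {t : FT A} {D : Type}
    (mul : D → D → D) (e : D) (ca : A → D) (ct : t.State → D)
    (T4 : D → D → D → D → Prop)
    (assoc : ∀ x y z : D, mul (mul x y) z = mul x (mul y z))
    (T4e : ∀ x : D, T4 x e e x)
    (T4a : ∀ q a b q', (q, a, b, q') ∈ t.delta → T4 (ct q) (ca a) (ca b) (ct q'))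
    (T4m : ∀ x y z v y' z' w : D, T4 x y z v → T4 v y' z' w →
      T4 x (mul y y') (mul z z') w) :
    ∀ {q w u q'}, t.Ext q w u q' →
      T4 (ct q) (wordVal mul e ca w) (wordVal mul e ca u) (ct q') := by
  intro q w u q' h
  induction h with
  | refl => exact T4e _
  | @step w u q' a b q'' h hd ih =>
    rcases eq_or_ne w [] with rfl | hw
    · obtain ⟨rfl, rfl⟩ := FT.Ext_nil h
      exact T4a _ _ _ _ hd
    · have hu : u ≠ [] := by
        intro h'; subst h'; exact hw (List.length_eq_zero_iff.mp (FT.Ext_len h))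
      rw [wordVal_append mul e ca assoc w a hw,
        wordVal_append mul e ca assoc u b hu]
      exact T4m _ _ _ _ _ _ _ ih (T4a _ _ _ _ hd)

lemma rmc_aux {A : Type} (M1 M2 : FA A) (t : FT A) :
    (∃ w, (∃ w0 ∈ M1.lang, Relation.ReflTransGen t.rel w0 w) ∧ w ∈ M2.lang) →
      ∀ (D : Type) (mul : D → D → D) (e : D) (ca : A → D)
        (c1 : M1.State → D) (c2 : M2.State → D) (ct : t.State → D)
        (RR InitP BadP : D → Prop) (TransP : D → D → Prop)
        (T3 : D → D → D → Prop) (T4 : D → D → D → D → Prop),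
        SatRMC M1 M2 t mul e ca c1 c2 ct RR InitP BadP TransP T3 T4 →
        ∃ x : D, RR x ∧ BadP x := by
  rintro ⟨w, ⟨w0, hw0, hreach⟩, hbad⟩ D mul e ca c1 c2 ct RR InitP BadP TransP T3 T4 hsat
  obtain ⟨assoc, T3e1, T3e2, T3a1, T3a2, T3m, hInit, hBad, T4e, T4a, T4m,
    hTrans, hIR, hRT⟩ := hsat
  have key1 : ∀ {q w q'}, M1.Ext q w q' →
      T3 (c1 q) (wordVal mul e ca w) (c1 q') :=
    fun h => ext_T3 mul e ca c1 T3 assoc id T3e1 T3a1 T3m h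
  have key2 : ∀ {q w q'}, M2.Ext q w q' →
      T3 (c2 q) (wordVal mul e ca w) (c2 q') :=
    fun h => ext_T3 mul e ca c2 T3 assoc id T3e2 T3a2 T3m h
  obtain ⟨q1, hq1, hext1⟩ := hw0
  have hR0 : RR (wordVal mul e ca w0) :=
    hIR _ (hInit _ ⟨q1, hq1, key1 hext1⟩)
  have hRw : RR (wordVal mul e ca w) := by
    clear hbad
    induction hreach with
    | refl => exact hR0
    | tail hr hstep ih =>
      obtain ⟨qt, hqt, hext⟩ := hstep
      exact hRT _ _ ih ((hTrans _ _).mpr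
        ⟨qt, hqt, ext_T4 mul e ca ct T4 assoc T4e T4a T4m hext⟩)
  obtain ⟨q2, hq2, hext2⟩ := hbad
  exact ⟨wordVal mul e ca w, hRw, hBad _ ⟨q2, hq2, key2 hext2⟩⟩

/-- if `r_τ*(Init) ∩ Bad ≠ ∅` then `∃x (R(x) ∧ Bad(x))` holds
in every first-order structure satisfying all formulas of `Φ`; consequently, if
some first-order structure satisfies `Φ` together with `¬∃x (R(x) ∧ Bad(x))`,
then `r_τ*(Init) ∩ Bad = ∅`. -/
theorem rmc_soundness {A : Type} [Finite A] (M1 M2 : FA A) (t : FT A) :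
    ((∃ w, (∃ w0 ∈ M1.lang, Relation.ReflTransGen t.rel w0 w) ∧ w ∈ M2.lang) →
      ∀ (D : Type) (mul : D → D → D) (e : D) (ca : A → D)
        (c1 : M1.State → D) (c2 : M2.State → D) (ct : t.State → D)
        (RR InitP BadP : D → Prop) (TransP : D → D → Prop)
        (T3 : D → D → D → Prop) (T4 : D → D → D → D → Prop),
        SatRMC M1 M2 t mul e ca c1 c2 ct RR InitP BadP TransP T3 T4 →
        ∃ x : D, RR x ∧ BadP x) ∧
    ((∃ (D : Type) (mul : D → D → D) (e : D) (ca : A → D)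
        (c1 : M1.State → D) (c2 : M2.State → D) (ct : t.State → D)
        (RR InitP BadP : D → Prop) (TransP : D → D → Prop)
        (T3 : D → D → D → Prop) (T4 : D → D → D → D → Prop),
        SatRMC M1 M2 t mul e ca c1 c2 ct RR InitP BadP TransP T3 T4 ∧
          ¬ ∃ x : D, RR x ∧ BadP x) →
      ¬ ∃ w, (∃ w0 ∈ M1.lang, Relation.ReflTransGen t.rel w0 w) ∧
          w ∈ M2.lang) := by
  refine ⟨rmc_aux M1 M2 t, ?_⟩
  rintro ⟨D, mul, e, ca, c1, c2, ct, RR, InitP, BadP, TransP, T3, T4,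
    hsat, hno⟩ hne
  exact hno (rmc_aux M1 M2 t hne D mul e ca c1 c2 ct RR InitP BadP TransP T3 T4 hsat)
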